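/- If λ ∈ ℝ is such that λI − D is invertible and λ = Σ_{k=1}ⁿ b_k²/(λ − D_k)², then λ is an eigenvalue of M. -/

import Mathlib

open Matrix

noncomputable def Mmat {n : ℕ} (D b : Fin n → ℝ) :
    Matrix (Fin n ⊕ Fin n ⊕ Unit) (Fin n ⊕ Fin n ⊕ Unit) ℝ :=
  Matrix.of fun i j =>
    match i, j with
    | Sum.inl i, Sum.inl j => if i = j then D i else 0
    | Sum.inl i, Sum.inr (Sum.inl j) => if i = j then -b i else 0
    | Sum.inl _, Sum.inr (Sum.inr _) => 0
    | Sum.inr (Sum.inl _), Sum.inl _ => 0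
    | Sum.inr (Sum.inl i), Sum.inr (Sum.inl j) => if i = j then D i else 0
    | Sum.inr (Sum.inl i), Sum.inr (Sum.inr _) => -b i
    | Sum.inr (Sum.inr _), Sum.inl _ => 1
    | Sum.inr (Sum.inr _), Sum.inr _ => 0

/-- `f(y) = (1/4)‖y‖⁴ − (1/2) yᵀ D y + bᵀ y`. -/
noncomputable def fD {n : ℕ} (D b : Fin n → ℝ) (y : Fin n → ℝ) : ℝ :=
  (1/4) * (y ⬝ᵥ y)^2 - (1/2) * (y ⬝ᵥ (Matrix.diagonal D *ᵥ y)) + b ⬝ᵥ y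

theorem stmt14 {n : ℕ} (hn : 0 < n) (D b : Fin n → ℝ) (hD : Antitone D)
    (lam : ℝ)
    (hinv : IsUnit (lam • (1 : Matrix (Fin n) (Fin n) ℝ) - Matrix.diagonal D))
    (hsum : lam = ∑ k : Fin n, (b k)^2 / (lam - D k)^2) :
    ∃ v : Fin n ⊕ Fin n ⊕ Unit → ℝ, v ≠ 0 ∧ Mmat D b *ᵥ v = lam • v := by
  have hdiag : lam • (1 : Matrix (Fin n) (Fin n) ℝ) - Matrix.diagonal D
      = Matrix.diagonal (fun i => lam - D i) := by
    ext i j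
    by_cases h : i = j <;>
      simp [Matrix.diagonal, Matrix.one_apply, h, Matrix.sub_apply]
  have hne : ∀ k, lam - D k ≠ 0 := by
    intro k hk
    rw [hdiag] at hinv
    have hdet : IsUnit (Matrix.diagonal (fun i => lam - D i)).det :=
      (Matrix.isUnit_iff_isUnit_det _).mp hinv
    rw [Matrix.det_diagonal] at hdet
    have : (∏ i, (lam - D i)) = 0 := Finset.prod_eq_zero (Finset.mem_univ k) hk
    rw [this] at hdet
    exact hdet.ne_zero rfl
  refine ⟨fun i => match i with
    | Sum.inl i => (b i)^2 / (lam - D i)^2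
    | Sum.inr (Sum.inl i) => -(b i) / (lam - D i)
    | Sum.inr (Sum.inr _) => 1, ?_, ?_⟩
  · intro h
    have := congrFun h (Sum.inr (Sum.inr ()))
    simp at this
  · funext i
    match i with
    | Sum.inl i =>
        simp only [Mmat, Matrix.mulVec, dotProduct, Fintype.sum_sum_type,
          Matrix.of_apply, Pi.smul_apply, smul_eq_mul]
        simp only [ite_mul, zero_mul, Finset.sum_ite_eq, Finset.mem_univ, if_true,
          Finset.sum_const, Finset.card_univ, mul_zero, add_zero]
        field_simp [hne i]
        ring
    | Sum.inr (Sum.inl i) =>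
        simp only [Mmat, Matrix.mulVec, dotProduct, Fintype.sum_sum_type,
          Matrix.of_apply, Pi.smul_apply, smul_eq_mul]
        simp only [ite_mul, zero_mul, Finset.sum_ite_eq, Finset.mem_univ, if_true,
          Finset.sum_const, Finset.card_univ, mul_zero, add_zero, zero_add]
        field_simp [hne i]
        simp only [Fintype.card_unit, Nat.cast_one]
        ring
    | Sum.inr (Sum.inr _) =>
        simp only [Mmat, Matrix.mulVec, dotProduct, Fintype.sum_sum_type,
          Matrix.of_apply, Pi.smul_apply, smul_eq_mul, one_mul, zero_mul,
          Finset.sum_const_zero, add_zero, mul_one]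
        exact hsum.symm
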